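/- arXiv:1302.3156 — 2 statements merged into one kernel-verified Lean document; each statement's English description precedes it below -/
import Mathlib

section
/- Let n ≥ 2, let A = (a_{ij}) be a symmetric positive-definite real n×n matrix with inverse (a^{ij}), and let b = (b_i) be a covector with 0 < b² := a^{ij}b_ib_j < 1. Let r be a symmetric bilinear form on ℝⁿ and σ a linear form on ℝⁿ. Suppose there exist a linear form f on ℝⁿ and a constant τ ∈ ℝ such that (β(y) − α(y))·r(y,y) + 4α(y)²·σ(y) = (f(y) − τ·α(y))·((1+2b²)α(y)² − 3β(y)²) for all y ∈ ℝⁿ. Then r(y,y) = τ·((1+2b²)α(y)² − 3β(y)²) for all y, and σ = 0. -/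
open scoped BigOperators

noncomputable section

/-- `α(y) = √(a_{ij} yⁱ yʲ)`. -/
def alphaOf {n : ℕ} (A : Matrix (Fin n) (Fin n) ℝ) (y : Fin n → ℝ) : ℝ :=
  Real.sqrt (∑ i, ∑ j, A i j * y i * y j)

/-- `β(y) = b_i yⁱ`. -/
def betaOf {n : ℕ} (b : Fin n → ℝ) (y : Fin n → ℝ) : ℝ := ∑ i, b i * y i

private lemma lin_comb {n : ℕ} (c u v : Fin n → ℝ) (a d : ℝ) :
    (∑ i, c i * (a * u i + d * v i)) = a * (∑ i, c i * u i) + d * (∑ i, c i * v i) := by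
  rw [Finset.mul_sum, Finset.mul_sum, ← Finset.sum_add_distrib]
  exact Finset.sum_congr rfl fun i _ => by ring

private lemma lin_comb2 {n : ℕ} (c u v : Fin n → ℝ) (t : ℝ) :
    (∑ i, c i * (u i + t * v i)) = (∑ i, c i * u i) + t * (∑ i, c i * v i) := by
  rw [Finset.mul_sum, ← Finset.sum_add_distrib]
  exact Finset.sum_congr rfl fun i _ => by ring

private lemma quad_comb {n : ℕ} (A : Matrix (Fin n) (Fin n) ℝ) (u v : Fin n → ℝ) (t : ℝ) :
    (∑ i, ∑ j, A i j * (u i + t * v i) * (u j + t * v j)) =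
      (∑ i, ∑ j, A i j * u i * u j)
      + t * (∑ i, ∑ j, A i j * (u i * v j + v i * u j))
      + t ^ 2 * (∑ i, ∑ j, A i j * v i * v j) := by
  rw [Finset.mul_sum, Finset.mul_sum, ← Finset.sum_add_distrib, ← Finset.sum_add_distrib]
  refine Finset.sum_congr rfl fun i _ => ?_
  rw [Finset.mul_sum, Finset.mul_sum, ← Finset.sum_add_distrib, ← Finset.sum_add_distrib]
  exact Finset.sum_congr rfl fun j _ => by ring

private lemma lin_single {n : ℕ} (c : Fin n → ℝ) (i₀ : Fin n) :
    (∑ i, c i * (Pi.single i₀ 1 : Fin n → ℝ) i) = c i₀ := by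
  simp [Pi.single_apply]

private lemma lin_neg {n : ℕ} (c y : Fin n → ℝ) :
    (∑ i, c i * (-y) i) = -(∑ i, c i * y i) := by
  simp [mul_neg]

private lemma quad_neg {n : ℕ} (M : Matrix (Fin n) (Fin n) ℝ) (y : Fin n → ℝ) :
    (∑ i, ∑ j, M i j * (-y) i * (-y) j) = ∑ i, ∑ j, M i j * y i * y j := by
  refine Finset.sum_congr rfl fun i _ => Finset.sum_congr rfl fun j _ => ?_
  simp only [Pi.neg_apply]; ring

/-- Lemma 3.2: if `(β − α) r₀₀ + 4 α² σ₀ = (f − τα)((1+2b²)α² − 3β²)` identically in `y`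
(the meaning of `(s−1)r₀₀ + 4αs₀ ≡ 0 mod (1+2b²−3s²)`), then
`r₀₀ = τ((1+2b²)α² − 3β²)` and `σ = 0`. -/
theorem stmt_4 {n : ℕ} (hn : 2 ≤ n) (A : Matrix (Fin n) (Fin n) ℝ)
    (hsym : A.IsSymm) (hpos : A.PosDef) (b : Fin n → ℝ)
    (hb2pos : 0 < ∑ i, ∑ j, A⁻¹ i j * b i * b j)
    (hb2lt : (∑ i, ∑ j, A⁻¹ i j * b i * b j) < 1)
    (r : Matrix (Fin n) (Fin n) ℝ) (hr : r.IsSymm) (σ : Fin n → ℝ)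
    (f : Fin n → ℝ) (τ : ℝ)
    (h : ∀ y : Fin n → ℝ,
      (betaOf b y - alphaOf A y) * (∑ i, ∑ j, r i j * y i * y j)
        + 4 * (alphaOf A y)^2 * (∑ i, σ i * y i) =
      ((∑ i, f i * y i) - τ * alphaOf A y) *
        ((1 + 2 * ∑ i, ∑ j, A⁻¹ i j * b i * b j) * (alphaOf A y)^2
          - 3 * (betaOf b y)^2)) :
    (∀ y : Fin n → ℝ,
      (∑ i, ∑ j, r i j * y i * y j) =
        τ * ((1 + 2 * ∑ i, ∑ j, A⁻¹ i j * b i * b j) * (alphaOf A y)^2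
          - 3 * (betaOf b y)^2)) ∧
    σ = 0 := by
  classical
  set B := ∑ i, ∑ j, A⁻¹ i j * b i * b j with hBdef
  simp only [betaOf] at h ⊢
  -- basic positivity facts
  have hQpos : ∀ y : Fin n → ℝ, y ≠ 0 → 0 < ∑ i, ∑ j, A i j * y i * y j := by
    intro y hy
    have := hpos.dotProduct_mulVec_pos hy
    simpa [dotProduct, Matrix.mulVec, Finset.mul_sum, mul_comm, mul_assoc,
      mul_left_comm] using this
  have hQ0 : ∀ y : Fin n → ℝ, 0 ≤ ∑ i, ∑ j, A i j * y i * y j := by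
    intro y
    rcases eq_or_ne y 0 with rfl | hy
    · simp
    · exact (hQpos y hy).le
  have hsq : ∀ y : Fin n → ℝ, (alphaOf A y) ^ 2 = ∑ i, ∑ j, A i j * y i * y j :=
    fun y => Real.sq_sqrt (hQ0 y)
  have hapos : ∀ y : Fin n → ℝ, y ≠ 0 → 0 < alphaOf A y :=
    fun y hy => Real.sqrt_pos.mpr (hQpos y hy)
  have haneg : ∀ y : Fin n → ℝ, alphaOf A (-y) = alphaOf A y := by
    intro y; unfold alphaOf; rw [quad_neg A y]
  -- Step A : r₀₀ = τ G
  have hRG : ∀ y : Fin n → ℝ,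
      (∑ i, ∑ j, r i j * y i * y j) =
        τ * ((1 + 2 * B) * (alphaOf A y) ^ 2 - 3 * (∑ i, b i * y i) ^ 2) := by
    intro y
    rcases eq_or_ne y 0 with rfl | hy
    · simp [alphaOf]
    · have h1 := h y
      have h2 := h (-y)
      rw [haneg y, quad_neg r y, lin_neg b y, lin_neg σ y, lin_neg f y] at h2
      have key : alphaOf A y *
          ((∑ i, ∑ j, r i j * y i * y j)
            - τ * ((1 + 2 * B) * (alphaOf A y) ^ 2 - 3 * (∑ i, b i * y i) ^ 2)) = 0 := by
        linear_combination (-(1:ℝ)/2) * h1 + (-(1:ℝ)/2) * h2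
      rcases mul_eq_zero.mp key with hk | hk
      · exact absurd hk (ne_of_gt (hapos y hy))
      · linarith
  -- Step B : 4 Q S = L G  (purely polynomial)
  have hQS : ∀ y : Fin n → ℝ,
      4 * (∑ i, ∑ j, A i j * y i * y j) * (∑ i, σ i * y i) =
        ((∑ i, f i * y i) - τ * (∑ i, b i * y i)) *
          ((1 + 2 * B) * (∑ i, ∑ j, A i j * y i * y j) - 3 * (∑ i, b i * y i) ^ 2) := by
    intro y
    linear_combination (h y) - ((∑ i, b i * y i) - alphaOf A y) * (hRG y)
      - (4 * (∑ i, σ i * y i)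
          - (1 + 2 * B) * ((∑ i, f i * y i) - τ * (∑ i, b i * y i))) * (hsq y)
  -- kernel of L is contained in kernel of S
  have hker : ∀ y : Fin n → ℝ,
      ((∑ i, f i * y i) - τ * (∑ i, b i * y i)) = 0 → (∑ i, σ i * y i) = 0 := by
    intro y hLy
    rcases eq_or_ne y 0 with rfl | hy
    · simp
    · have hq := hQS y
      rw [hLy, zero_mul] at hq
      have h4 : (4 * (∑ i, ∑ j, A i j * y i * y j)) ≠ 0 := by
        have := hQpos y hy; positivity
      exact (mul_eq_zero.mp hq).resolve_left h4
  refine ⟨hRG, ?_⟩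
  by_cases hl : ∀ i, f i - τ * b i = 0
  · -- L ≡ 0, hence S ≡ 0
    have hL0 : ∀ y : Fin n → ℝ, ((∑ i, f i * y i) - τ * (∑ i, b i * y i)) = 0 := by
      intro y
      rw [Finset.mul_sum, ← Finset.sum_sub_distrib]
      refine Finset.sum_eq_zero fun i _ => ?_
      linear_combination y i * hl i
    funext i
    rw [Pi.zero_apply]
    have := hker (Pi.single i (1:ℝ)) (hL0 _)
    rwa [lin_single σ i] at this
  · -- L ≢ 0 : derive a contradiction
    exfalso
    push_neg at hl
    obtain ⟨i₀, hi₀⟩ := hl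
    -- S is proportional to L
    have hprop : ∀ y : Fin n → ℝ,
        (f i₀ - τ * b i₀) * (∑ i, σ i * y i)
          - σ i₀ * ((∑ i, f i * y i) - τ * (∑ i, b i * y i)) = 0 := by
      intro y
      have hker' := hker (fun i => (f i₀ - τ * b i₀) * y i
          + (-((∑ i, f i * y i) - τ * (∑ i, b i * y i))) * (Pi.single i₀ 1 : Fin n → ℝ) i) ?_
      · rw [lin_comb σ y (Pi.single i₀ (1:ℝ)) _ _, lin_single σ i₀] at hker'
        linear_combination hker'
      · rw [lin_comb f y (Pi.single i₀ (1:ℝ)) _ _, lin_single f i₀,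
          lin_comb b y (Pi.single i₀ (1:ℝ)) _ _, lin_single b i₀]
        ring
    -- main cubic identity with S replaced by its multiple of L
    have hstar : ∀ y : Fin n → ℝ,
        ((∑ i, f i * y i) - τ * (∑ i, b i * y i)) *
          (4 * σ i₀ * (∑ i, ∑ j, A i j * y i * y j)
            - (f i₀ - τ * b i₀) *
              ((1 + 2 * B) * (∑ i, ∑ j, A i j * y i * y j)
                - 3 * (∑ i, b i * y i) ^ 2)) = 0 := by
      intro y
      linear_combination (f i₀ - τ * b i₀) * hQS y
        - 4 * (∑ i, ∑ j, A i j * y i * y j) * hprop y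
        + (((1 + 2 * B) * (∑ i, ∑ j, A i j * y i * y j)
            - 3 * (∑ i, b i * y i) ^ 2)) * hprop y * 0
    -- extension to all y : the second factor vanishes identically
    have hext : ∀ y : Fin n → ℝ,
        4 * σ i₀ * (∑ i, ∑ j, A i j * y i * y j)
          - (f i₀ - τ * b i₀) *
            ((1 + 2 * B) * (∑ i, ∑ j, A i j * y i * y j)
              - 3 * (∑ i, b i * y i) ^ 2) = 0 := by
      intro y
      by_cases hLy : ((∑ i, f i * y i) - τ * (∑ i, b i * y i)) = 0
      · -- perturb in the direction e = single i₀ 1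
        have inst : ∀ t : ℝ, t ≠ 0 →
            4 * σ i₀ * ((∑ i, ∑ j, A i j * y i * y j)
                + t * (∑ i, ∑ j, A i j * (y i * (Pi.single i₀ 1 : Fin n → ℝ) j
                    + (Pi.single i₀ 1 : Fin n → ℝ) i * y j))
                + t ^ 2 * (∑ i, ∑ j, A i j * (Pi.single i₀ 1 : Fin n → ℝ) i * (Pi.single i₀ 1 : Fin n → ℝ) j))
              - (f i₀ - τ * b i₀) *
                ((1 + 2 * B) * ((∑ i, ∑ j, A i j * y i * y j)
                    + t * (∑ i, ∑ j, A i j * (y i * (Pi.single i₀ 1 : Fin n → ℝ) j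
                        + (Pi.single i₀ 1 : Fin n → ℝ) i * y j))
                    + t ^ 2 * (∑ i, ∑ j, A i j * (Pi.single i₀ 1 : Fin n → ℝ) i * (Pi.single i₀ 1 : Fin n → ℝ) j))
                  - 3 * ((∑ i, b i * y i) + t * b i₀) ^ 2) = 0 := by
          intro t ht
          have hz := hstar (y + t • (Pi.single i₀ 1 : Fin n → ℝ))
          simp only [Pi.add_apply, Pi.smul_apply, smul_eq_mul] at hz
          rw [quad_comb A y (Pi.single i₀ (1:ℝ)) t,
            lin_comb2 f y (Pi.single i₀ (1:ℝ)) t, lin_single f i₀,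
            lin_comb2 b y (Pi.single i₀ (1:ℝ)) t, lin_single b i₀] at hz
          have hfac : ((∑ i, f i * y i) + t * f i₀ - τ * ((∑ i, b i * y i) + t * b i₀)) ≠ 0 := by
            have : ((∑ i, f i * y i) + t * f i₀ - τ * ((∑ i, b i * y i) + t * b i₀))
                = t * (f i₀ - τ * b i₀) := by linear_combination hLy
            rw [this]
            exact mul_ne_zero ht hi₀
          exact (mul_eq_zero.mp hz).resolve_left hfac
        have e1 := inst 1 one_ne_zero
        have e2 := inst (-1) (by norm_num)
        have e3 := inst 2 two_ne_zero
        linear_combination e1 + (1/3 : ℝ) * e2 - (1/3 : ℝ) * e3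
      · exact (mul_eq_zero.mp (hstar y)).resolve_left hLy
    -- choose j with b j ≠ 0
    obtain ⟨j, hbj⟩ : ∃ j, b j ≠ 0 := by
      by_contra hb
      push_neg at hb
      rw [hBdef] at hb2pos
      simp [hb] at hb2pos
    -- choose k ≠ j
    have : Nontrivial (Fin n) := Fin.nontrivial_iff_two_le.mpr hn
    obtain ⟨k, hk⟩ := exists_ne j
    -- a nonzero vector with β = 0
    set y₀ : Fin n → ℝ :=
      fun i => b k * (Pi.single j 1 : Fin n → ℝ) i + (-(b j)) * (Pi.single k 1 : Fin n → ℝ) i with hy₀def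
    have hβ0 : (∑ i, b i * y₀ i) = 0 := by
      rw [hy₀def, lin_comb b (Pi.single j (1:ℝ)) (Pi.single k (1:ℝ)) _ _,
        lin_single b j, lin_single b k]
      ring
    have hy₀ne : y₀ ≠ 0 := by
      intro h0
      have := congrFun h0 k
      rw [hy₀def] at this
      simp [Pi.single_apply, hk, Ne.symm hk] at this
      exact hbj this
    have hQy₀ := hQpos y₀ hy₀ne
    have hc : (4 * σ i₀ - (f i₀ - τ * b i₀) * (1 + 2 * B)) = 0 := by
      have hx := hext y₀
      rw [hβ0] at hx
      have : (4 * σ i₀ - (f i₀ - τ * b i₀) * (1 + 2 * B))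
          * (∑ i, ∑ j, A i j * y₀ i * y₀ j) = 0 := by linear_combination hx
      exact (mul_eq_zero.mp this).resolve_right (ne_of_gt hQy₀)
    have h3 : 3 * (f i₀ - τ * b i₀) * (b j) ^ 2 = 0 := by
      have h4 := hext (Pi.single j (1:ℝ))
      rw [lin_single b j] at h4
      linear_combination h4
        - (∑ i, ∑ j', A i j' * (Pi.single j 1 : Fin n → ℝ) i * (Pi.single j 1 : Fin n → ℝ) j') * hc
    have : (f i₀ - τ * b i₀) * (b j) ^ 2 ≠ 0 :=
      mul_ne_zero hi₀ (pow_ne_zero 2 hbj)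
    exact this (by linarith)
end
end

section
/- Let n ≥ 3, let A = (a_{ij}) be a symmetric positive-definite real n×n matrix with inverse (a^{ij}), let b = (b_i) be a covector with 0 < b² := a^{ij}b_ib_j < 1, let (s_{ij}) be a skew-symmetric real n×n matrix, and let γ ∈ ℝ. Suppose that for every pair of indices (i,k) there exist a linear form f_{ik} on ℝⁿ and a constant σ_{ik} ∈ ℝ such that 3(n−1)·s_{i0}(y)·s_{k0}(y) + γ·(α(y)b_k − ȳ_k)·((n−1)α(y)b_i − (3+b²)ȳ_i) = (f_{ik}(y) + σ_{ik}·α(y))·(α(y) − β(y)) for all y ∈ ℝⁿ. Then γ = 0 and s_{ij} = 0 for all i, j (i.e., the 1-form β is closed). -/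
open scoped BigOperators

noncomputable section

/-- `ȳ_k = a_{kj} yʲ`. -/
def lowered {n : ℕ} (A : Matrix (Fin n) (Fin n) ℝ) (k : Fin n) (y : Fin n → ℝ) : ℝ :=
  ∑ j, A k j * y j

/-- helper: nonzero kernel vector of a linear functional, for `n ≥ 2`. -/
lemma ker_exists' {n : ℕ} (hn : 2 ≤ n) (c : Fin n → ℝ) :
    ∃ y : Fin n → ℝ, y ≠ 0 ∧ ∑ j, c j * y j = 0 := by
  by_cases hc : ∀ j, c j = 0
  · refine ⟨Pi.single ⟨0, by omega⟩ 1, ?_, by simp [hc]⟩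
    intro h0
    have := congrFun h0 ⟨0, by omega⟩
    simp [Pi.single_apply] at this
  · push_neg at hc
    obtain ⟨j0, hj0⟩ := hc
    have hne : ((⟨0, by omega⟩ : Fin n) : Fin n) ≠ (⟨1, by omega⟩ : Fin n) := by
      simp [Fin.ext_iff]
    set j1 : Fin n := if j0 = ⟨0, by omega⟩ then ⟨1, by omega⟩ else ⟨0, by omega⟩ with hj1def
    have hj01 : j1 ≠ j0 := by
      by_cases hcase : j0 = (⟨0, by omega⟩ : Fin n)
      · simp only [hj1def, if_pos hcase]
        rw [hcase]; exact hne.symm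
      · simp only [hj1def, if_neg hcase]
        exact fun hh => hcase hh.symm
    refine ⟨Pi.single j1 (c j0) - Pi.single j0 (c j1), ?_, ?_⟩
    · intro h0
      have := congrFun h0 j1
      simp [Pi.single_apply, hj01, hj01.symm] at this
      exact hj0 this
    · have h1 : ∀ (a : Fin n) (v : ℝ), ∑ j, c j * (Pi.single a v : Fin n → ℝ) j = c a * v := by
        intro a v
        rw [Finset.sum_eq_single a]
        · simp
        · intro bb _ hb; simp [Pi.single_apply, hb]
        · simp
      simp only [Pi.sub_apply, mul_sub, Finset.sum_sub_distrib, h1]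
      ring

/-- helper: sum against a single basis vector. -/
lemma sum_mul_single' {n : ℕ} (c : Fin n → ℝ) (a : Fin n) (v : ℝ) :
    ∑ j, c j * (Pi.single a v : Fin n → ℝ) j = c a * v := by
  rw [Finset.sum_eq_single a]
  · simp
  · intro bb _ hb; simp [Pi.single_apply, hb]
  · simp

/-- helper: an affine function of `t` vanishing for all `t` off one bad point is zero. -/
lemma affine_zero' {p r B v : ℝ} (hB : B ≠ 0)
    (h : ∀ t : ℝ, v + t * B ≠ 0 → p + t * r = 0) : p = 0 ∧ r = 0 := by
  have h1 := h ((B - v)/B) (by rw [div_mul_cancel₀ _ hB]; intro hh; apply hB; linarith)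
  have h2 := h ((2*B - v)/B) (by rw [div_mul_cancel₀ _ hB]; intro hh; apply hB; linarith)
  have e1 : B * p + (B - v) * r = 0 := by field_simp at h1; linarith
  have e2 : B * p + (2*B - v) * r = 0 := by field_simp at h2; linarith
  have hr : B * r = 0 := by linarith
  have hr0 : r = 0 := by rcases mul_eq_zero.mp hr with h'|h'; exact absurd h' hB; exact h'
  have hp : B * p = 0 := by rw [hr0] at e1; linarith
  exact ⟨by rcases mul_eq_zero.mp hp with h'|h'; exact absurd h' hB; exact h', hr0⟩

/-- helper: sums against `-y`. -/
lemma sum_mul_neg' {n : ℕ} (c : Fin n → ℝ) (y : Fin n → ℝ) :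
    ∑ j, c j * (-y) j = -∑ j, c j * y j := by
  rw [← Finset.sum_neg_distrib]
  exact Finset.sum_congr rfl fun j _ => by simp

lemma betaOf_neg' {n : ℕ} (b y : Fin n → ℝ) : betaOf b (-y) = - betaOf b y :=
  sum_mul_neg' b y

lemma lowered_neg' {n : ℕ} (A : Matrix (Fin n) (Fin n) ℝ) (k : Fin n) (y : Fin n → ℝ) :
    lowered A k (-y) = - lowered A k y :=
  sum_mul_neg' (fun j => A k j) y

lemma alphaOf_neg' {n : ℕ} (A : Matrix (Fin n) (Fin n) ℝ) (y : Fin n → ℝ) :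
    alphaOf A (-y) = alphaOf A y := by
  unfold alphaOf
  congr 1
  exact Finset.sum_congr rfl fun i _ => Finset.sum_congr rfl fun j _ => by simp

/-- helper: linearity of sums along a line. -/
lemma sum_mul_lin' {n : ℕ} (c y v : Fin n → ℝ) (t : ℝ) :
    ∑ j, c j * (fun j => y j + t * v j) j = (∑ j, c j * y j) + t * ∑ j, c j * v j := by
  rw [Finset.mul_sum, ← Finset.sum_add_distrib]
  exact Finset.sum_congr rfl fun j _ => by ring

lemma lowered_lin' {n : ℕ} (A : Matrix (Fin n) (Fin n) ℝ) (k : Fin n) (y v : Fin n → ℝ)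
    (t : ℝ) : lowered A k (fun j => y j + t * v j) = lowered A k y + t * lowered A k v :=
  sum_mul_lin' (fun j => A k j) y v t

lemma betaOf_lin' {n : ℕ} (b y v : Fin n → ℝ) (t : ℝ) :
    betaOf b (fun j => y j + t * v j) = betaOf b y + t * betaOf b v :=
  sum_mul_lin' b y v t

/-- Lemma 3.5: if, for every pair `(i,k)`,
`3(n−1)s_{i0}s_{k0} + γ(αb_k − ȳ_k)((n−1)αb_i − (3+b²)ȳ_i) = (f_{ik} + σ_{ik}α)(α − β)`
identically in `y` (the meaning of the divisibility by `1 − s`), then `γ = 0` and the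
skew-symmetric matrix `(s_{ij})` vanishes, i.e. `β` is closed. -/
theorem stmt_6 {n : ℕ} (hn : 3 ≤ n) (A : Matrix (Fin n) (Fin n) ℝ)
    (hsym : A.IsSymm) (hpos : A.PosDef) (b : Fin n → ℝ)
    (hb2pos : 0 < ∑ i, ∑ j, A⁻¹ i j * b i * b j)
    (hb2lt : (∑ i, ∑ j, A⁻¹ i j * b i * b j) < 1)
    (s : Matrix (Fin n) (Fin n) ℝ) (hskew : ∀ i j, s i j = - s j i) (γ : ℝ)
    (h : ∀ i k : Fin n, ∃ (f : Fin n → ℝ) (σ : ℝ), ∀ y : Fin n → ℝ,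
      3 * ((n : ℝ) - 1) * (∑ j, s i j * y j) * (∑ j, s k j * y j)
        + γ * (alphaOf A y * b k - lowered A k y) *
          (((n : ℝ) - 1) * alphaOf A y * b i
            - (3 + ∑ i', ∑ j', A⁻¹ i' j' * b i' * b j') * lowered A i y) =
      ((∑ j, f j * y j) + σ * alphaOf A y) * (alphaOf A y - betaOf b y)) :
    γ = 0 ∧ ∀ i j, s i j = 0 := by
  classical
  set B2 : ℝ := ∑ i, ∑ j, A⁻¹ i j * b i * b j with hB2
  -- positivity of the quadratic form
  have hq_pos : ∀ y : Fin n → ℝ, y ≠ 0 → 0 < ∑ i, ∑ j, A i j * y i * y j := by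
    intro y hy
    have h0 := hpos.dotProduct_mulVec_pos hy
    have heq : dotProduct (star y) (A.mulVec y) = ∑ i, ∑ j, A i j * y i * y j := by
      simp only [dotProduct, Matrix.mulVec, Pi.star_apply, star_trivial, Finset.mul_sum]
      exact Finset.sum_congr rfl fun i _ => Finset.sum_congr rfl fun j _ => by ring
    rwa [heq] at h0
  have hq_nonneg : ∀ y : Fin n → ℝ, 0 ≤ ∑ i, ∑ j, A i j * y i * y j := by
    intro y
    by_cases hy : y = 0
    · subst hy; simp
    · exact (hq_pos y hy).le
  have hα2 : ∀ y : Fin n → ℝ, alphaOf A y ^ 2 = ∑ i, ∑ j, A i j * y i * y j := fun y =>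
    Real.sq_sqrt (hq_nonneg y)
  have hαpos : ∀ y : Fin n → ℝ, y ≠ 0 → 0 < alphaOf A y := fun y hy =>
    Real.sqrt_pos.2 (hq_pos y hy)
  -- b is nonzero
  have hbne : b ≠ 0 := by
    intro h0
    have hz : B2 = 0 := by rw [hB2, h0]; simp
    rw [hz] at hb2pos; exact lt_irrefl 0 hb2pos
  have hbb : 0 < ∑ j, b j * b j := by
    obtain ⟨i0, hi0⟩ := Function.ne_iff.mp hbne
    refine Finset.sum_pos' (fun i _ => mul_self_nonneg _) ⟨i0, Finset.mem_univ _, ?_⟩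
    have : b i0 ≠ 0 := by simpa using hi0
    exact mul_self_pos.mpr this
  -- the key polynomial identity, obtained by splitting the hypothesis into
  -- even and odd parts in y
  have key : ∀ i k : Fin n, ∃ σ : ℝ, ∀ y : Fin n → ℝ,
      3 * ((n : ℝ) - 1) * (∑ j, s i j * y j) * (∑ j, s k j * y j)
        + γ * ((n : ℝ) - 1) * (∑ i'', ∑ j'', A i'' j'' * y i'' * y j'') * b i * b k
        + γ * (3 + B2) * lowered A i y * lowered A k y
        - γ * betaOf b y *
            ((3 + B2) * b k * lowered A i y + ((n : ℝ) - 1) * b i * lowered A k y)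
      = σ * ((∑ i'', ∑ j'', A i'' j'' * y i'' * y j'') - (betaOf b y) ^ 2) := by
    intro i k
    obtain ⟨f, σ, hf⟩ := h i k
    refine ⟨σ, fun y => ?_⟩
    by_cases hy : y = 0
    · subst hy; simp [betaOf, lowered]
    · have E1 := hf y
      have E2 := hf (-y)
      rw [alphaOf_neg', betaOf_neg', lowered_neg', lowered_neg',
        sum_mul_neg' (fun j => s i j), sum_mul_neg' (fun j => s k j),
        sum_mul_neg' f] at E2
      have hα : alphaOf A y ≠ 0 := (hαpos y hy).ne'
      have hq := hα2 y
      have h3 : alphaOf A y * (2 * (∑ j, f j * y j) - 2 * σ * betaOf b y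
          + 2 * γ * ((3 + B2) * b k * lowered A i y
            + ((n : ℝ) - 1) * b i * lowered A k y)) = 0 := by
        linear_combination E2 - E1
      have hII : (∑ j, f j * y j) = σ * betaOf b y
          - γ * ((3 + B2) * b k * lowered A i y
            + ((n : ℝ) - 1) * b i * lowered A k y) := by
        rcases mul_eq_zero.mp h3 with h' | h'
        · exact absurd h' hα
        · linarith
      linear_combination (1/2) * E1 + (1/2) * E2
        + (σ - γ * ((n : ℝ) - 1) * b i * b k) * hq - (betaOf b y) * hII
  -- a nonzero vector orthogonal to b
  obtain ⟨y0, hy0ne, hy0β⟩ := ker_exists' (by omega) b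
  have hy0β' : betaOf b y0 = 0 := hy0β
  -- the constant 4 + b² − n is nonzero
  have hconst : ((4 : ℝ) + B2 - n) ≠ 0 := by
    by_cases h4 : n ≤ 4
    · have : (n : ℝ) ≤ 4 := by exact_mod_cast h4
      nlinarith [hb2pos]
    · have : (5 : ℝ) ≤ n := by
        have : 5 ≤ n := by omega
        exact_mod_cast this
      nlinarith [hb2lt]
  -- the skew identity γ β (b_k ȳ_i − b_i ȳ_k) = 0
  have hgbeta : ∀ (i k : Fin n) (y : Fin n → ℝ),
      γ * betaOf b y * (b k * lowered A i y - b i * lowered A k y) = 0 := by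
    intro i k
    obtain ⟨σ1, h1⟩ := key i k
    obtain ⟨σ2, h2⟩ := key k i
    have hσ : σ1 = σ2 := by
      have e1 := h1 y0
      have e2 := h2 y0
      rw [hy0β'] at e1 e2
      have hq0 : 0 < ∑ i'', ∑ j'', A i'' j'' * y0 i'' * y0 j'' := hq_pos y0 hy0ne
      have hdiff : (σ1 - σ2) * (∑ i'', ∑ j'', A i'' j'' * y0 i'' * y0 j'') = 0 := by
        linear_combination e2 - e1
      rcases mul_eq_zero.mp hdiff with h' | h'
      · linarith
      · exact absurd h' hq0.ne'
    intro y
    have e1 := h1 y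
    have e2 := h2 y
    rw [hσ] at e1
    have hmain : ((4 : ℝ) + B2 - n) *
        (γ * betaOf b y * (b k * lowered A i y - b i * lowered A k y)) = 0 := by
      linear_combination e2 - e1
    rcases mul_eq_zero.mp hmain with h' | h'
    · exact absurd h' hconst
    · exact h'
  -- step 1 : γ = 0
  have hγ0 : γ = 0 := by
    by_contra hγ
    have hall : ∀ (i k : Fin n) (y : Fin n → ℝ), betaOf b y ≠ 0 →
        b k * lowered A i y - b i * lowered A k y = 0 := by
      intro i k y hβ
      rcases mul_eq_zero.mp (hgbeta i k y) with h' | h'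
      · rcases mul_eq_zero.mp h' with h'' | h''
        · exact absurd h'' hγ
        · exact absurd h'' hβ
      · exact h'
    have hall2 : ∀ (i k : Fin n) (y : Fin n → ℝ),
        b k * lowered A i y - b i * lowered A k y = 0 := by
      intro i k y
      have haff := affine_zero' (B := ∑ j, b j * b j) (v := betaOf b y)
        (p := b k * lowered A i y - b i * lowered A k y)
        (r := b k * lowered A i b - b i * lowered A k b) hbb.ne' ?_
      · exact haff.1
      · intro t ht
        have hβt : betaOf b (fun j => y j + t * b j) ≠ 0 := by
          rw [betaOf_lin']
          exact ht
        have := hall i k (fun j => y j + t * b j) hβt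
        rw [lowered_lin', lowered_lin'] at this
        linarith
    obtain ⟨i0, hi0'⟩ := Function.ne_iff.mp hbne
    have hi0 : b i0 ≠ 0 := by simpa using hi0'
    have hrow : ∀ (k j : Fin n), b k * A i0 j = b i0 * A k j := by
      intro k j
      have := hall2 i0 k (Pi.single j 1)
      have hl1 : lowered A i0 (Pi.single j 1) = A i0 j := by
        rw [lowered, sum_mul_single' (fun j' => A i0 j') j 1]; ring
      have hl2 : lowered A k (Pi.single j 1) = A k j := by
        rw [lowered, sum_mul_single' (fun j' => A k j') j 1]; ring
      rw [hl1, hl2] at this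
      linarith
    obtain ⟨y1, hy1ne, hy1ker⟩ := ker_exists' (by omega) (fun j => A i0 j)
    have hq1 : (∑ i, ∑ j, A i j * y1 i * y1 j) = 0 := by
      have hterm : ∀ i : Fin n, (∑ j, A i j * y1 j) = 0 := by
        intro i
        have : b i0 * (∑ j, A i j * y1 j) = b i * (∑ j, A i0 j * y1 j) := by
          rw [Finset.mul_sum, Finset.mul_sum]
          exact Finset.sum_congr rfl fun j _ => by
            linear_combination (-(y1 j)) * hrow i j
        rw [hy1ker, mul_zero] at this
        rcases mul_eq_zero.mp this with h' | h'
        · exact absurd h' hi0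
        · exact h'
      have : (∑ i, ∑ j, A i j * y1 i * y1 j) = ∑ i, y1 i * (∑ j, A i j * y1 j) := by
        refine Finset.sum_congr rfl fun i _ => ?_
        rw [Finset.mul_sum]
        exact Finset.sum_congr rfl fun j _ => by ring
      rw [this]
      simp only [hterm, mul_zero, Finset.sum_const_zero]
    exact absurd hq1 (hq_pos y1 hy1ne).ne'
  -- positivity of q − β²  via Cauchy–Schwarz
  have hdet : IsUnit A.det := isUnit_iff_ne_zero.mpr hpos.det_pos.ne'
  set u : Fin n → ℝ := A⁻¹.mulVec b with hu
  have hAu : A.mulVec u = b := by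
    rw [hu, Matrix.mulVec_mulVec, Matrix.mul_nonsing_inv A hdet, Matrix.one_mulVec]
  have hAuj : ∀ j, (∑ i, A i j * u i) = b j := by
    intro j
    have h1 : (A.mulVec u) j = b j := by rw [hAu]
    rw [← h1]
    simp only [Matrix.mulVec, dotProduct]
    exact Finset.sum_congr rfl fun i _ => by rw [hsym.apply j i]
  have hβu : ∀ y : Fin n → ℝ, (∑ i, ∑ j, A i j * u i * y j) = betaOf b y := by
    intro y
    rw [Finset.sum_comm]
    simp only [betaOf]
    refine Finset.sum_congr rfl fun j _ => ?_
    rw [← hAuj j, Finset.sum_mul]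
  have hyu : ∀ y : Fin n → ℝ, (∑ i, ∑ j, A i j * y i * u j) = betaOf b y := by
    intro y
    rw [← hβu y, Finset.sum_comm]
    refine Finset.sum_congr rfl fun j _ => Finset.sum_congr rfl fun i _ => ?_
    rw [hsym.apply j i]; ring
  have hB2u : (∑ i, ∑ j, A i j * u i * u j) = B2 := by
    rw [Finset.sum_comm]
    rw [hB2]
    have : ∀ j, (∑ i, A i j * u i * u j) = b j * u j := by
      intro j
      rw [← hAuj j, Finset.sum_mul]
    simp only [this]
    have hu' : ∀ j, u j = ∑ l, A⁻¹ j l * b l := by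
      intro j; rw [hu]; simp [Matrix.mulVec, dotProduct]
    refine Finset.sum_congr rfl fun j _ => ?_
    rw [hu' j, Finset.mul_sum]
    exact Finset.sum_congr rfl fun l _ => by ring
  have hqmb : ∀ y : Fin n → ℝ, y ≠ 0 →
      0 < (∑ i, ∑ j, A i j * y i * y j) - (betaOf b y) ^ 2 := by
    intro y hy
    set β := betaOf b y with hβ
    set w : Fin n → ℝ := fun t => B2 * y t - β * u t with hw
    have hw0 : 0 ≤ ∑ i, ∑ j, A i j * w i * w j := hq_nonneg w
    have hexp : (∑ i, ∑ j, A i j * w i * w j)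
        = B2 ^ 2 * (∑ i, ∑ j, A i j * y i * y j)
          - B2 * β * (∑ i, ∑ j, A i j * y i * u j)
          - B2 * β * (∑ i, ∑ j, A i j * u i * y j)
          + β ^ 2 * (∑ i, ∑ j, A i j * u i * u j) := by
      have hterm : ∀ i j, A i j * w i * w j
          = B2 ^ 2 * (A i j * y i * y j) - B2 * β * (A i j * y i * u j)
            - B2 * β * (A i j * u i * y j) + β ^ 2 * (A i j * u i * u j) := by
        intro i j; rw [hw]; ring
      simp only [hterm, Finset.sum_add_distrib, Finset.sum_sub_distrib, ← Finset.mul_sum]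
    rw [hyu, hβu, hB2u] at hexp
    have hCS : β ^ 2 ≤ B2 * (∑ i, ∑ j, A i j * y i * y j) := by
      rw [hexp] at hw0
      nlinarith [hb2pos]
    have hqy : 0 < ∑ i, ∑ j, A i j * y i * y j := hq_pos y hy
    nlinarith [hb2lt]
  -- step 2 : s = 0
  refine ⟨hγ0, fun i j => ?_⟩
  obtain ⟨σ, hk⟩ := key i i
  obtain ⟨y2, hy2ne, hy2ker⟩ := ker_exists' (by omega) (fun j => s i j)
  have hσ0 : σ = 0 := by
    have hky := hk y2
    rw [hγ0, hy2ker] at hky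
    have h0 : σ * ((∑ i'', ∑ j'', A i'' j'' * y2 i'' * y2 j'') - (betaOf b y2) ^ 2) = 0 := by
      linear_combination -hky
    rcases mul_eq_zero.mp h0 with h' | h'
    · exact h'
    · exact absurd h' (hqmb y2 hy2ne).ne'
  have hn1 : (0 : ℝ) < (n : ℝ) - 1 := by
    have : (3 : ℝ) ≤ n := by exact_mod_cast hn
    linarith
  have hzero : ∀ y : Fin n → ℝ, (∑ j', s i j' * y j') = 0 := by
    intro y
    have hky := hk y
    rw [hγ0, hσ0] at hky
    have hsq : (∑ j', s i j' * y j') * (∑ j', s i j' * y j') = 0 := by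
      have h33 : 3 * ((n : ℝ) - 1) * (∑ j', s i j' * y j') * (∑ j', s i j' * y j') = 0 := by
        linear_combination hky
      have h3n : (3 : ℝ) * ((n : ℝ) - 1) ≠ 0 := by positivity
      rcases mul_eq_zero.mp h33 with h' | h'
      · rcases mul_eq_zero.mp h' with h'' | h''
        · exact absurd h'' h3n
        · rw [h'', zero_mul]
      · rw [h', mul_zero]
    exact mul_self_eq_zero.mp hsq
  have := hzero (Pi.single j 1)
  rw [sum_mul_single' (fun j' => s i j') j 1] at this
  simpa using this
end
end
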